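/- The genus of Γₙ, i.e., the cardinality of ℕ ∖ Γₙ, equals Σ_{i=1}^{n} bᵢ(aᵢ − 1). -/

import Mathlib

/-- A numerical semigroup: an additive submonoid of ℕ with finite complement. -/
def IsNumericalSemigroup (Γ : Set ℕ) : Prop :=
  0 ∈ Γ ∧ (∀ x ∈ Γ, ∀ y ∈ Γ, x + y ∈ Γ) ∧ Γᶜ.Finite

/-- The inductive numerical semigroups Γ₀ = ℕ, Γᵢ = aᵢ·Γ_{i-1} ∪ (aᵢbᵢ + ℕ). -/
def IndSG (a b : ℕ → ℕ) : ℕ → Set ℕ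
  | 0 => Set.univ
  | i + 1 => (fun x => a (i + 1) * x) '' IndSG a b i ∪ {x | a (i + 1) * b (i + 1) ≤ x}

lemma count_nonmul (A B : ℕ) (hA : 2 ≤ A) :
    {x : ℕ | x < A * B ∧ ¬ A ∣ x}.ncard = B * (A - 1) := by
  classical
  have h1 : {x : ℕ | x < A * B ∧ ¬ A ∣ x} =
      ↑((Finset.range (A * B)).filter (fun x => ¬ A ∣ x)) := by
    ext x
    simp [Finset.mem_filter, Finset.mem_range, Set.mem_setOf_eq]
  rw [h1, Set.ncard_coe_finset]
  have h2 : (Finset.range (A * B)).filter (fun x => A ∣ x)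
      = (Finset.range B).image (fun y => A * y) := by
    ext x
    simp only [Finset.mem_filter, Finset.mem_range, Finset.mem_image]
    constructor
    · rintro ⟨hx, y, rfl⟩
      exact ⟨y, Nat.lt_of_mul_lt_mul_left hx, rfl⟩
    · rintro ⟨y, hy, rfl⟩
      exact ⟨mul_lt_mul_of_pos_left hy (by omega : 0 < A), y, rfl⟩
  have h3 : ((Finset.range (A * B)).filter (fun x => A ∣ x)).card = B := by
    rw [h2, Finset.card_image_of_injective _ (mul_right_injective₀ (by omega : A ≠ 0)),
      Finset.card_range]
  have h4 := Finset.card_filter_add_card_filter_not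
    (s := Finset.range (A * B)) (p := fun x => A ∣ x)
  rw [Finset.card_range, h3] at h4
  obtain ⟨C, rfl⟩ : ∃ C, A = C + 1 := ⟨A - 1, by omega⟩
  have : (C + 1) * B = C * B + B := by ring
  have hgoal : B * (C + 1 - 1) = C * B := by simp [Nat.mul_comm]
  omega

lemma compl_eq {A B : ℕ} (hA : 0 < A) (Γ : Set ℕ) (hΓ : Γᶜ ⊆ Set.Iio B) :
    ((fun x => A * x) '' Γ ∪ {x | A * B ≤ x})ᶜ
      = (fun x => A * x) '' Γᶜ ∪ {x | x < A * B ∧ ¬ A ∣ x} := by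
  ext x
  simp only [Set.mem_compl_iff, Set.mem_union, Set.mem_image, Set.mem_setOf_eq, not_or]
  constructor
  · rintro ⟨h1, h2⟩
    push_neg at h1 h2
    by_cases hd : A ∣ x
    · obtain ⟨y, rfl⟩ := hd
      exact Or.inl ⟨y, fun hy => h1 y hy rfl, rfl⟩
    · exact Or.inr ⟨h2, hd⟩
  · rintro (⟨y, hy, rfl⟩ | ⟨hlt, hnd⟩)
    · constructor
      · rintro ⟨z, hz, hzy⟩
        have : z = y := mul_left_cancel₀ (by omega : A ≠ 0) hzy
        exact hy (this ▸ hz)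
      · have hyB : y < B := hΓ hy
        have : A * y < A * B := mul_lt_mul_of_pos_left hyB (by omega : 0 < A)
        omega
    · constructor
      · rintro ⟨z, _, rfl⟩
        exact hnd ⟨z, rfl⟩
      · omega

lemma indsg_aux (n : ℕ) (a b : ℕ → ℕ)
    (ha : ∀ i, 1 ≤ i → i ≤ n → 2 ≤ a i)
    (hb : ∀ i, 1 ≤ i → i + 1 ≤ n → a i * b i ≤ b (i + 1)) :
    ∀ i, i ≤ n → (IndSG a b i)ᶜ ⊆ Set.Iio (if i = 0 then 0 else a i * b i) ∧
      ((IndSG a b i)ᶜ).ncard = ∑ j ∈ Finset.Icc 1 i, b j * (a j - 1) := by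
  intro i
  induction i with
  | zero => intro _; constructor <;> simp [IndSG]
  | succ i ih =>
    intro hin
    obtain ⟨ihs, ihc⟩ := ih (by omega)
    have hA : 2 ≤ a (i + 1) := ha _ (by omega) hin
    have hble : (if i = 0 then 0 else a i * b i) ≤ b (i + 1) := by
      split
      · omega
      · exact hb i (by omega) hin
    have hsub : (IndSG a b i)ᶜ ⊆ Set.Iio (b (i + 1)) :=
      ihs.trans (Set.Iio_subset_Iio hble)
    have hΓfin : ((IndSG a b i)ᶜ).Finite := (Set.finite_Iio _).subset hsub
    have hcompl : (IndSG a b (i + 1))ᶜ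
        = (fun x => a (i + 1) * x) '' (IndSG a b i)ᶜ
          ∪ {x | x < a (i + 1) * b (i + 1) ∧ ¬ a (i + 1) ∣ x} := by
      have : IndSG a b (i + 1)
          = (fun x => a (i + 1) * x) '' IndSG a b i ∪ {x | a (i + 1) * b (i + 1) ≤ x} := rfl
      rw [this, compl_eq (by omega) _ hsub]
    have hdisj : Disjoint ((fun x => a (i + 1) * x) '' (IndSG a b i)ᶜ)
        {x | x < a (i + 1) * b (i + 1) ∧ ¬ a (i + 1) ∣ x} := by
      rw [Set.disjoint_left]
      rintro x ⟨y, _, rfl⟩ ⟨_, hnd⟩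
      exact hnd ⟨y, rfl⟩
    have hfin1 : ((fun x => a (i + 1) * x) '' (IndSG a b i)ᶜ).Finite := hΓfin.image _
    have hfin2 : ({x : ℕ | x < a (i + 1) * b (i + 1) ∧ ¬ a (i + 1) ∣ x}).Finite :=
      (Set.finite_Iio _).subset (fun x hx => hx.1)
    constructor
    · rw [hcompl]
      rintro x (⟨y, hy, rfl⟩ | ⟨h, _⟩)
      · have hyB : y < b (i + 1) := hsub hy
        have : a (i + 1) * y < a (i + 1) * b (i + 1) :=
          mul_lt_mul_of_pos_left hyB (by omega : 0 < a (i + 1))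
        simpa using this
      · simpa using h
    · rw [hcompl, Set.ncard_union_eq hdisj hfin1 hfin2,
        Set.ncard_image_of_injective _ (mul_right_injective₀ (by omega : a (i + 1) ≠ 0)),
        ihc, count_nonmul _ _ hA, Finset.sum_Icc_succ_top (by omega : 1 ≤ i + 1)]

/-- The genus of Γₙ equals `Σ_{i=1}^n bᵢ(aᵢ - 1)`. -/
theorem stmt11 (n : ℕ) (hn : 1 ≤ n) (a b : ℕ → ℕ)
    (ha : ∀ i, 1 ≤ i → i ≤ n → 2 ≤ a i)
    (hb1 : 1 ≤ b 1)
    (hb : ∀ i, 1 ≤ i → i + 1 ≤ n → a i * b i ≤ b (i + 1)) :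
    ((IndSG a b n)ᶜ).ncard = ∑ i ∈ Finset.Icc 1 n, b i * (a i - 1) := by
  exact (indsg_aux n a b ha hb n le_rfl).2
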